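/- Let P be an N×N embeddable stochastic matrix, and let R be an intensity matrix with exp(R) = P. Then every (complex) eigenvalue μ of R satisfies |Im(μ)| ≤ −log(det(P)). -/

import Mathlib

open Matrix

/-- A real square matrix is (entrywise) nonnegative if all of its entries are nonnegative. -/
def IsNonnegMatrix {ι : Type*} (B : Matrix ι ι ℝ) : Prop :=
  ∀ i j, 0 ≤ B i j

/-- A Z-matrix is a real square matrix all of whose off-diagonal entries are nonpositive. -/
def IsZMatrix {ι : Type*} (Q : Matrix ι ι ℝ) : Prop :=
  ∀ i j, i ≠ j → Q i j ≤ 0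

/-- A nonnegative matrix `B` is infinitely divisible if for every positive integer `n`
there exists a nonnegative matrix `K` with `K ^ n = B`. -/
def IsInfinitelyDivisible {ι : Type*} [Fintype ι] [DecidableEq ι] (B : Matrix ι ι ℝ) : Prop :=
  ∀ n : ℕ, 0 < n → ∃ K : Matrix ι ι ℝ, IsNonnegMatrix K ∧ K ^ n = B

/-- `B` is strongly infinitely divisible if it is infinitely divisible and `det B > 0`. -/
def IsStronglyInfinitelyDivisible {ι : Type*} [Fintype ι] [DecidableEq ι]
    (B : Matrix ι ι ℝ) : Prop :=
  IsInfinitelyDivisible B ∧ 0 < B.det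

/-- An inverse M-matrix is an invertible nonnegative matrix whose inverse is a Z-matrix. -/
def IsInverseMMatrix {ι : Type*} [Fintype ι] [DecidableEq ι] (K : Matrix ι ι ℝ) : Prop :=
  IsUnit K.det ∧ IsNonnegMatrix K ∧ IsZMatrix K⁻¹

/-- A stochastic matrix is a nonnegative square matrix each of whose rows sums to `1`. -/
def IsStochasticMatrix {ι : Type*} [Fintype ι] (P : Matrix ι ι ℝ) : Prop :=
  IsNonnegMatrix P ∧ ∀ i, ∑ j, P i j = 1

/-- An intensity matrix is a real square matrix whose off-diagonal entries are nonnegative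
and each of whose rows sums to `0`. -/
def IsIntensityMatrix {ι : Type*} [Fintype ι] (R : Matrix ι ι ℝ) : Prop :=
  (∀ i j, i ≠ j → 0 ≤ R i j) ∧ ∀ i, ∑ j, R i j = 0

open NormedSpace Polynomial in
lemma hasDerivAt_det_exp_zero {n : ℕ} (R : Matrix (Fin n) (Fin n) ℝ) :
    HasDerivAt (fun t : ℝ => (exp (t • R)).det) R.trace 0 := by
  letI : SeminormedRing (Matrix (Fin n) (Fin n) ℝ) := Matrix.linftyOpSemiNormedRing
  letI : NormedRing (Matrix (Fin n) (Fin n) ℝ) := Matrix.linftyOpNormedRing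
  letI : NormedAlgebra ℝ (Matrix (Fin n) (Fin n) ℝ) := Matrix.linftyOpNormedAlgebra
  have hg : HasDerivAt (fun t : ℝ => exp (t • R)) R 0 := by
    have h := hasDerivAt_exp_smul_const (𝕂 := ℝ) R 0
    simp only [zero_smul, exp_zero, one_mul] at h
    exact h
  have hentry : ∀ i j, HasDerivAt (fun t : ℝ => exp (t • R) i j) (R i j) 0 := by
    intro i j
    let l1 : Matrix (Fin n) (Fin n) ℝ →ₗ[ℝ] (Fin n → ℝ) := LinearMap.proj i
    let l2 : (Fin n → ℝ) →ₗ[ℝ] ℝ := LinearMap.proj j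
    have := (LinearMap.toContinuousLinearMap (l2.comp l1)).hasFDerivAt.comp_hasDerivAt 0 hg
    exact this
  have hsum : HasDerivAt
      (fun t : ℝ => ∑ σ : Equiv.Perm (Fin n),
        ((Equiv.Perm.sign σ : ℤ) : ℝ) * ∏ i, exp (t • R) (σ i) i)
      (∑ σ : Equiv.Perm (Fin n), ((Equiv.Perm.sign σ : ℤ) : ℝ) *
        ∑ i, (∏ j ∈ Finset.univ.erase i, exp ((0:ℝ) • R) (σ j) j) • R (σ i) i) 0 := by
    apply HasDerivAt.fun_sum
    intro σ _
    exact (HasDerivAt.fun_finsetProd (fun i _ => hentry (σ i) i)).const_mul _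
  have hval : (∑ σ : Equiv.Perm (Fin n), ((Equiv.Perm.sign σ : ℤ) : ℝ) *
        ∑ i, (∏ j ∈ Finset.univ.erase i, exp ((0:ℝ) • R) (σ j) j) • R (σ i) i) = R.trace := by
    have h1 : exp ((0:ℝ) • R) = (1 : Matrix (Fin n) (Fin n) ℝ) := by
      simp [exp_zero]
    rw [h1]
    rw [Finset.sum_eq_single (1 : Equiv.Perm (Fin n))]
    · simp [Matrix.trace, Matrix.diag, Matrix.one_apply]
    · intro σ _ hσ
      have : ∀ i : Fin n, (∏ j ∈ Finset.univ.erase i, (1 : Matrix (Fin n) (Fin n) ℝ) (σ j) j) = 0 := by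
        intro i
        obtain ⟨a, ha⟩ : ∃ a, σ a ≠ a := by
          by_contra h
          push_neg at h
          exact hσ (Equiv.ext (by simpa using h))
        by_cases hai : a = i
        · have hb : σ (σ a) ≠ σ a := by
            intro h
            exact ha (σ.injective h)
          have hbi : σ a ≠ i := by rw [← hai]; exact ha
          refine Finset.prod_eq_zero (Finset.mem_erase.mpr ⟨hbi, Finset.mem_univ _⟩) ?_
          simp [Matrix.one_apply, hb]
        · refine Finset.prod_eq_zero (Finset.mem_erase.mpr ⟨hai, Finset.mem_univ _⟩) ?_
          simp [Matrix.one_apply, ha]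
      simp [this]
    · simp
  have heq : (fun t : ℝ => ∑ σ : Equiv.Perm (Fin n),
        ((Equiv.Perm.sign σ : ℤ) : ℝ) * ∏ i, exp (t • R) (σ i) i)
      = fun t : ℝ => (exp (t • R)).det := by
    funext t
    rw [Matrix.det_apply']
  rw [hval] at hsum
  exact heq ▸ hsum

open NormedSpace in
lemma my_det_exp {n : ℕ} (R : Matrix (Fin n) (Fin n) ℝ) :
    (exp R).det = Real.exp R.trace := by
  set f : ℝ → ℝ := fun t => (exp (t • R)).det with hfdef
  have hmul : ∀ s t : ℝ, f (s + t) = f s * f t := by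
    intro s t
    simp only [hfdef, add_smul]
    rw [Matrix.exp_add_of_commute _ _ (((Commute.refl R).smul_left s).smul_right t),
      Matrix.det_mul]
  have H0 : HasDerivAt f R.trace 0 := hasDerivAt_det_exp_zero R
  have Ht : ∀ t : ℝ, HasDerivAt f (f t * R.trace) t := by
    intro t
    have h1 : HasDerivAt (fun s => f t * f s) (f t * R.trace) 0 := H0.const_mul (f t)
    have h2 : HasDerivAt (fun s => f (t + s)) (f t * R.trace) 0 := by
      have : (fun s => f (t + s)) = fun s => f t * f s := by
        funext s; rw [hmul]
      rw [this]; exact h1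
    have h3 := h2.scomp_of_eq t (((hasDerivAt_id t).sub_const t) : HasDerivAt (fun x => x - t) 1 t) (by simp)
    simp only [Function.comp_def] at h3
    have he : (fun x : ℝ => f (t + (id x - t))) = f := by funext x; simp
    rw [he] at h3
    simpa using h3
  set c := R.trace
  have hexp' : ∀ t : ℝ, HasDerivAt (fun t : ℝ => Real.exp (-c * t)) (-c * Real.exp (-c * t)) t := by
    intro t
    have := (Real.hasDerivAt_exp (-c * t)).comp t ((hasDerivAt_id t).const_mul (-c))
    simpa [Function.comp_def, mul_comm] using this
  set u : ℝ → ℝ := fun t => f t * Real.exp (-c * t) with hudef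
  have hu : ∀ t, HasDerivAt u 0 t := by
    intro t
    have := (Ht t).mul (hexp' t)
    exact this.congr_deriv (by ring)
  have hconst : u 1 = u 0 := by
    have : Differentiable ℝ u := fun t => (hu t).differentiableAt
    exact is_const_of_deriv_eq_zero this (fun t => (hu t).deriv) 1 0
  have hu0 : u 0 = 1 := by
    simp [hudef, hfdef, exp_zero]
  have hu1 : u 1 = (exp R).det * Real.exp (-c) := by
    simp [hudef, hfdef]
  rw [hu1, hu0] at hconst
  have := congrArg (· * Real.exp c) hconst
  simp only [one_mul, mul_assoc, ← Real.exp_add] at this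
  simpa using this

open Polynomial in
lemma root_is_eigenvalue {n : ℕ} (M : Matrix (Fin n) (Fin n) ℂ) (μ : ℂ)
    (hμ : μ ∈ M.charpoly.roots) : Module.End.HasEigenvalue (Matrix.toLin' M) μ := by
  have h0 : eval μ M.charpoly = 0 := (Polynomial.mem_roots'.mp hμ).2
  have h1 : eval μ M.charpoly = (Matrix.diagonal (fun _ : Fin n => μ) - M).det := by
    rw [Matrix.charpoly, ← Polynomial.coe_evalRingHom, RingHom.map_det]
    congr 1
    ext i j
    by_cases h : i = j
    · subst h; simp [charmatrix_apply_eq]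
    · simp [charmatrix_apply_ne _ _ _ h, Matrix.diagonal_apply_ne _ h]
  have h2 : ¬ IsUnit (Matrix.diagonal (fun _ : Fin n => μ) - M) := by
    rw [Matrix.isUnit_iff_isUnit_det, ← h1, h0]
    exact fun h => by simpa using h
  have h3 : μ ∈ spectrum ℂ M := by
    have halg : algebraMap ℂ (Matrix (Fin n) (Fin n) ℂ) μ = Matrix.diagonal (fun _ => μ) := by
      simp [Matrix.algebraMap_eq_diagonal]
    rw [spectrum.mem_iff, halg]
    exact h2
  have h4 : μ ∈ spectrum ℂ (Matrix.toLin' M) := by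
    have := AlgEquiv.spectrum_eq (Matrix.toLinAlgEquiv' (R := ℂ) (n := Fin n)) M
    rw [show (Matrix.toLinAlgEquiv' M : _) = Matrix.toLin' M from rfl] at this
    rw [this]; exact h3
  exact Module.End.hasEigenvalue_iff_mem_spectrum.mpr h4

theorem stmt19 (N : ℕ) (P : Matrix (Fin N) (Fin N) ℝ) (hP : IsStochasticMatrix P)
    (R : Matrix (Fin N) (Fin N) ℝ) (hR : IsIntensityMatrix R)
    (hexp : NormedSpace.exp R = P) :
    ∀ μ : ℂ, μ ∈ (R.map Complex.ofReal).charpoly.roots →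
      |μ.im| ≤ -Real.log P.det := by
  intro μ hμ
  have hdet : P.det = Real.exp R.trace := by rw [← hexp, my_det_exp]
  have hlog : Real.log P.det = R.trace := by rw [hdet, Real.log_exp]
  rw [hlog]
  -- diagonal entries are nonpositive
  have hdiag : ∀ i, R i i ≤ 0 := by
    intro i
    have h := Finset.add_sum_erase Finset.univ (R i) (Finset.mem_univ i)
    rw [hR.2 i] at h
    have hnn : 0 ≤ ∑ j ∈ Finset.univ.erase i, R i j :=
      Finset.sum_nonneg fun j hj => hR.1 i j (Ne.symm (Finset.mem_erase.mp hj).1)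
    linarith
  -- Gershgorin
  obtain ⟨k, hk⟩ := eigenvalue_mem_ball (root_is_eigenvalue _ μ hμ)
  rw [Metric.mem_closedBall, Complex.dist_eq] at hk
  have hradius : (∑ j ∈ Finset.univ.erase k, ‖(R.map Complex.ofReal) k j‖) = -R k k := by
    have h := Finset.add_sum_erase Finset.univ (R k) (Finset.mem_univ k)
    rw [hR.2 k] at h
    have : ∀ j ∈ Finset.univ.erase k, ‖(R.map Complex.ofReal) k j‖ = R k j := by
      intro j hj
      have hnn := hR.1 k j (Ne.symm (Finset.mem_erase.mp hj).1)
      simp [Matrix.map_apply, Complex.norm_real, abs_of_nonneg hnn]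
    rw [Finset.sum_congr rfl this]
    linarith
  have him : |μ.im| ≤ -R k k := by
    have h1 : |(μ - (R.map Complex.ofReal) k k).im| ≤ ‖μ - (R.map Complex.ofReal) k k‖ :=
      Complex.abs_im_le_norm _
    have h2 : (μ - (R.map Complex.ofReal) k k).im = μ.im := by
      simp [Matrix.map_apply]
    rw [h2] at h1
    calc |μ.im| ≤ ‖μ - (R.map Complex.ofReal) k k‖ := h1
      _ ≤ _ := hk.trans_eq hradius
  refine him.trans ?_
  have : -R k k ≤ ∑ i, -R i i := by
    refine Finset.single_le_sum (f := fun i => -R i i) (fun i _ => ?_) (Finset.mem_univ k)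
    simpa using neg_nonneg.mpr (hdiag i)
  refine this.trans_eq ?_
  simp [Matrix.trace, Matrix.diag]
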